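/- For every integer L ≥ 1, every K ∈ {1,…,L}, every ε > 0 and every s ∈ ℝ^L, the smoothed top-sum dominates the top-sum and the gap is controlled at rate ε: 0 ≤ topsum_{K,ε}(s) − topsum_K(s) ≤ ε · E[topsum_K(Z)]. -/

import Mathlib

open MeasureTheory ProbabilityTheory

/-- The list of coordinates of `s : ℝ^L` sorted in decreasing order. -/
noncomputable def descSort {L : ℕ} (s : Fin L → ℝ) : List ℝ :=
  (Multiset.sort (Multiset.map s Finset.univ.val) (· ≤ ·)).reverse

/-- `kthLargest K s` is the `K`-th largest coordinate of `s` (1-indexed), i.e. `s_(K)`. -/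
noncomputable def kthLargest {L : ℕ} (K : ℕ) (s : Fin L → ℝ) : ℝ :=
  (descSort s).getD (K - 1) 0

/-- `topsum K s` is the sum of the `K` largest coordinates of `s`,
with the convention `topsum 0 s = 0`. -/
noncomputable def topsum {L : ℕ} (K : ℕ) (s : Fin L → ℝ) : ℝ :=
  ((descSort s).take K).sum

/-- The standard Gaussian measure `N(0, Id_L)` on `ℝ^L`:
the coordinates are i.i.d. standard normal random variables. -/
noncomputable def stdGaussian (L : ℕ) : Measure (EuclideanSpace ℝ (Fin L)) :=
  (Measure.pi (fun _ : Fin L => gaussianReal 0 1)).map (MeasurableEquiv.toLp 2 (Fin L → ℝ))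

/-- The smoothed top-sum `topsumSm K ε s = E[topsum K (s + ε Z)]`, `Z ∼ N(0, Id_L)`. -/
noncomputable def topsumSm {L : ℕ} (K : ℕ) (ε : ℝ) (s : EuclideanSpace ℝ (Fin L)) : ℝ :=
  ∫ z, topsum K (s + ε • z) ∂(stdGaussian L)

/-- The smoothed top-K operator `topSm K ε s = topsumSm K ε s - topsumSm (K-1) ε s`. -/
noncomputable def topSm {L : ℕ} (K : ℕ) (ε : ℝ) (s : EuclideanSpace ℝ (Fin L)) : ℝ :=
  topsumSm K ε s - topsumSm (K - 1) ε s

/-- The 0/1 vector whose entries equal 1 exactly at the `K` coordinates carrying the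
`K` largest values of `v` (well defined when the `K`-th and `(K+1)`-th largest values
of `v` are distinct). -/
noncomputable def argtops {L : ℕ} (K : ℕ) (v : Fin L → ℝ) : Fin L → ℝ :=
  fun i => if kthLargest K v ≤ v i then 1 else 0


lemma descSort_coe {L : ℕ} (s : Fin L → ℝ) :
    ((descSort s : List ℝ) : Multiset ℝ) = Multiset.map s Finset.univ.val := by
  rw [descSort, Multiset.coe_reverse, Multiset.sort_eq]

lemma descSort_sorted {L : ℕ} (s : Fin L → ℝ) : (descSort s).Pairwise (· ≥ ·) := by
  have h := Multiset.pairwise_sort (Multiset.map s Finset.univ.val) (· ≤ ·)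
  exact List.pairwise_reverse.2 h

lemma descSort_length {L : ℕ} (s : Fin L → ℝ) : (descSort s).length = L := by
  simp [descSort]

lemma sum_take_le_add {l : List ℝ} {a : ℝ} (hal : ∀ x ∈ l, x ≤ a) {n : ℕ} (hn : n < l.length) :
    (l.take (n + 1)).sum ≤ a + (l.take n).sum := by
  rw [List.sum_take_succ _ _ hn]
  have := hal _ (List.getElem_mem hn)
  linarith

lemma sublist_sum_le : ∀ {l₁ l₂ : List ℝ}, l₁.Sublist l₂ → l₂.Pairwise (· ≥ ·) →
    l₁.sum ≤ (l₂.take l₁.length).sum := by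
  intro l₁ l₂ h
  induction h with
  | slnil => simp
  | @cons l₁ l₂ a h ih =>
    intro hs
    have hs₂ : l₂.Pairwise (· ≥ ·) := hs.of_cons
    cases l₁ with
    | nil => simp
    | cons b t =>
      have h1 := ih hs₂
      have hlen : t.length < l₂.length := by
        have := h.length_le
        simpa using this
      have hal : ∀ x ∈ l₂, x ≤ a := fun x hx => (List.pairwise_cons.mp hs).1 x hx
      have h2 := sum_take_le_add hal hlen
      calc (b :: t).sum ≤ (l₂.take (b :: t).length).sum := h1
        _ = (l₂.take (t.length + 1)).sum := by simp
        _ ≤ a + (l₂.take t.length).sum := h2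
        _ = ((a :: l₂).take ((b :: t).length)).sum := by simp
  | @cons_cons l₁ l₂ a h ih =>
    intro hs
    have := ih hs.of_cons
    simp only [List.sum_cons, List.length_cons, List.take_succ_cons]
    linarith

lemma sum_le_topsum {L K : ℕ} (v : Fin L → ℝ) (S : Finset (Fin L)) (hS : S.card = K) :
    ∑ i ∈ S, v i ≤ topsum K v := by
  classical
  set t : Multiset ℝ := S.val.map v with ht_def
  have ht : t ≤ Multiset.map v Finset.univ.val :=
    Multiset.map_le_map (Finset.val_le_iff.mpr (Finset.subset_univ S))
  set lt := (Multiset.sort t (· ≤ ·)).reverse with hlt_def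
  have hlt_coe : (lt : Multiset ℝ) = t := by
    simp [hlt_def, Multiset.coe_reverse, Multiset.sort_eq]
  have hsub : lt.Subperm (descSort v) := by
    rw [← Multiset.coe_le, hlt_coe, descSort_coe]
    exact ht
  have hlt_sorted : lt.Pairwise (· ≥ ·) := by
    have h := Multiset.pairwise_sort t (· ≤ ·)
    exact List.pairwise_reverse.2 h
  have hsl : lt.Sublist (descSort v) :=
    List.sublist_of_subperm_of_pairwise hsub hlt_sorted (descSort_sorted v)
  have hlen : lt.length = K := by
    rw [hlt_def, List.length_reverse, Multiset.length_sort, ht_def, Multiset.card_map]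
    exact hS
  have hsum : lt.sum = ∑ i ∈ S, v i := by
    calc lt.sum = (lt : Multiset ℝ).sum := (Multiset.sum_coe lt).symm
      _ = t.sum := by rw [hlt_coe]
      _ = ∑ i ∈ S, v i := rfl
  have := sublist_sum_le hsl (descSort_sorted v)
  rw [hlen, hsum] at this
  exact this

lemma exists_topsum {L K : ℕ} (hKL : K ≤ L) (v : Fin L → ℝ) :
    ∃ S : Finset (Fin L), S.card = K ∧ topsum K v = ∑ i ∈ S, v i := by
  classical
  have hperm : (descSort v).Perm (Finset.univ.toList.map v) := by
    rw [← Multiset.coe_eq_coe, descSort_coe]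
    simp [← Multiset.map_coe, Finset.coe_toList]
  have hsub : ((descSort v).take K).Subperm (Finset.univ.toList.map v) :=
    ((List.take_sublist K _).subperm).trans hperm.subperm
  obtain ⟨l', hl'p, hl's⟩ := hsub
  obtain ⟨l'', hl''s, rfl⟩ := List.sublist_map_iff.mp hl's
  have hnd : l''.Nodup := (Finset.univ.nodup_toList).sublist hl''s
  have hlenK : ((descSort v).take K).length = K := by
    rw [List.length_take, descSort_length]
    omega
  refine ⟨l''.toFinset, ?_, ?_⟩
  · rw [List.toFinset_card_of_nodup hnd]
    have := hl'p.length_eq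
    simp only [List.length_map] at this
    rw [this, hlenK]
  · rw [topsum, List.sum_toFinset v hnd, hl'p.sum_eq]

lemma topsum_add_le {L K : ℕ} (hKL : K ≤ L) (a b : Fin L → ℝ) :
    topsum K (fun i => a i + b i) ≤ topsum K a + topsum K b := by
  obtain ⟨S, hS, hEq⟩ := exists_topsum hKL (fun i => a i + b i)
  rw [hEq, Finset.sum_add_distrib]
  exact add_le_add (sum_le_topsum a S hS) (sum_le_topsum b S hS)

lemma topsum_smul {L K : ℕ} (hKL : K ≤ L) {c : ℝ} (hc : 0 ≤ c) (z : Fin L → ℝ) :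
    topsum K (fun i => c * z i) = c * topsum K z := by
  apply le_antisymm
  · obtain ⟨S, hS, hEq⟩ := exists_topsum hKL (fun i => c * z i)
    rw [hEq, ← Finset.mul_sum]
    exact mul_le_mul_of_nonneg_left (sum_le_topsum z S hS) hc
  · obtain ⟨S, hS, hEq⟩ := exists_topsum hKL z
    rw [hEq, Finset.mul_sum]
    exact sum_le_topsum _ S hS

lemma abs_topsum_le {L K : ℕ} (hKL : K ≤ L) (v : Fin L → ℝ) :
    |topsum K v| ≤ ∑ i, |v i| := by
  obtain ⟨S, hS, hEq⟩ := exists_topsum hKL v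
  rw [hEq]
  refine (Finset.abs_sum_le_sum_abs _ _).trans ?_
  exact Finset.sum_le_sum_of_subset_of_nonneg (Finset.subset_univ S)
    (fun i _ _ => abs_nonneg _)

lemma measurable_topsum {L K : ℕ} (hKL : K ≤ L) :
    Measurable (fun v : Fin L → ℝ => topsum K v) := by
  classical
  set F : Finset (Finset (Fin L)) := Finset.univ.filter (fun S => S.card = K) with hF
  have hne : F.Nonempty := by
    obtain ⟨S, _, hS⟩ := Finset.exists_subset_card_eq (s := (Finset.univ : Finset (Fin L)))
      (n := K) (by rw [Finset.card_univ, Fintype.card_fin]; exact hKL)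
    exact ⟨S, by simp [hF, hS]⟩
  have hrep : (fun v : Fin L → ℝ => topsum K v) = F.sup' hne (fun S v => ∑ i ∈ S, v i) := by
    funext v
    rw [Finset.sup'_apply]
    apply le_antisymm
    · obtain ⟨S, hS, hEq⟩ := exists_topsum hKL v
      rw [hEq]
      have hmem : S ∈ F := by simp [hF, hS]
      exact Finset.le_sup' (fun T => ∑ i ∈ T, v i) hmem
    · exact Finset.sup'_le _ _ fun S hSF => sum_le_topsum v S (by simpa [hF] using hSF)
  rw [hrep]
  exact Finset.measurable_sup' hne fun S _ => Finset.measurable_sum _ fun i _ =>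
    measurable_pi_apply i

instance stdGaussian_isProbabilityMeasure (L : ℕ) : IsProbabilityMeasure (stdGaussian L) :=
  Measure.isProbabilityMeasure_map (MeasurableEquiv.toLp 2 (Fin L → ℝ)).measurable.aemeasurable

lemma integrable_id_gaussian : Integrable id (gaussianReal 0 1) := by
  rw [gaussianReal_of_var_ne_zero 0 one_ne_zero]
  rw [integrable_withDensity_iff (measurable_gaussianPDF 0 1)
    (ae_of_all _ fun x => ENNReal.ofReal_lt_top)]
  have heq : (fun x : ℝ => id x * (gaussianPDF 0 1 x).toReal)
      = fun x => (Real.sqrt (2 * Real.pi))⁻¹ * (x * Real.exp (-(2⁻¹ : ℝ) * x ^ 2)) := by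
    funext x
    rw [gaussianPDF, ENNReal.toReal_ofReal (gaussianPDFReal_nonneg _ _ _), gaussianPDFReal]
    push_cast
    norm_num
    ring_nf
  rw [heq]
  exact (integrable_mul_exp_neg_mul_sq (by norm_num : (0:ℝ) < 2⁻¹)).const_mul _

lemma integral_id_gaussian : ∫ x, x ∂(gaussianReal 0 1) = 0 := by
  have hmap : Measure.map (fun x => (-1 : ℝ) * x) (gaussianReal 0 1) = gaussianReal 0 1 := by
    rw [gaussianReal_map_const_mul (-1 : ℝ)]
    congr 1
    · norm_num
    · ext
      push_cast
      norm_num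
  have h := integral_map (μ := gaussianReal 0 1) (φ := fun x => (-1 : ℝ) * x)
    ((measurable_const_mul _).aemeasurable) (f := fun y => y)
    (by rw [hmap]; exact aestronglyMeasurable_id)
  rw [hmap] at h
  simp only [neg_one_mul] at h
  rw [integral_neg] at h
  have h2 : (2:ℝ) * ∫ x, x ∂(gaussianReal 0 1) = 0 := by linarith
  linarith

lemma stdGaussian_map_eval {L : ℕ} (i : Fin L) :
    (stdGaussian L).map (fun z => z i) = gaussianReal 0 1 := by
  apply Measure.ext
  intro A hA
  have hm : Measurable (fun z : EuclideanSpace ℝ (Fin L) => z i) := by fun_prop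
  rw [_root_.stdGaussian, Measure.map_map hm (MeasurableEquiv.toLp 2 (Fin L → ℝ)).measurable,
    Measure.map_apply (hm.comp (MeasurableEquiv.toLp 2 (Fin L → ℝ)).measurable) hA]
  have hpre : ((fun z : EuclideanSpace ℝ (Fin L) => z i) ∘ (MeasurableEquiv.toLp 2 (Fin L → ℝ))) ⁻¹' A
      = Set.pi Set.univ (Function.update (fun _ : Fin L => (Set.univ : Set ℝ)) i A) := by
    ext z
    simp only [Set.mem_preimage, Function.comp_apply, MeasurableEquiv.toLp_apply,
      WithLp.ofLp_toLp, Set.mem_univ_pi, Function.update_apply]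
    constructor
    · intro h j
      by_cases hj : j = i
      · subst hj; simpa using h
      · simp [hj]
    · intro h
      have := h i
      simpa using this
  rw [hpre]
  refine Eq.trans (MeasureTheory.Measure.pi_pi (fun _ : Fin L => gaussianReal 0 1) _) ?_
  rw [Fintype.prod_eq_single i (fun j hj => by simp [Function.update_of_ne hj])]
  simp

lemma integrable_eval {L : ℕ} (i : Fin L) :
    Integrable (fun z : EuclideanSpace ℝ (Fin L) => z i) (stdGaussian L) := by
  have h := integrable_id_gaussian
  rw [← stdGaussian_map_eval i] at h
  have := (integrable_map_measure h.aestronglyMeasurable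
    (by fun_prop : Measurable fun z : EuclideanSpace ℝ (Fin L) => z i).aemeasurable).mp h
  simpa [Function.comp] using this

lemma integral_eval {L : ℕ} (i : Fin L) : ∫ z, z i ∂(stdGaussian L) = 0 := by
  have h := integral_map (μ := stdGaussian L) (φ := fun z => z i)
    (by fun_prop : Measurable fun z : EuclideanSpace ℝ (Fin L) => z i).aemeasurable (f := fun y => y)
    (by rw [stdGaussian_map_eval i]; exact aestronglyMeasurable_id)
  rw [stdGaussian_map_eval i] at h
  rw [← h]
  exact integral_id_gaussian

lemma integrable_topsum_affine {L K : ℕ} (hKL : K ≤ L) (a : EuclideanSpace ℝ (Fin L)) (c : ℝ) :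
    Integrable (fun z : EuclideanSpace ℝ (Fin L) => topsum K (a + c • z)) (stdGaussian L) := by
  have hmeas : Measurable (fun z : EuclideanSpace ℝ (Fin L) => topsum K (a + c • z)) := by
    have h1 : Measurable (fun z : EuclideanSpace ℝ (Fin L) => (fun i => a i + c * z i : Fin L → ℝ)) := by
      apply measurable_pi_lambda
      intro i
      have hzi : Measurable (fun z : EuclideanSpace ℝ (Fin L) => z i) := by fun_prop
      exact measurable_const.add (hzi.const_mul c)
    exact (measurable_topsum hKL).comp h1
  refine Integrable.mono' (g := fun z => ∑ i, (|a i| + |c| * |z i|)) ?_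
    hmeas.aestronglyMeasurable ?_
  · exact integrable_finset_sum _ fun i _ =>
      (integrable_const _).add (((integrable_eval i).abs).const_mul _)
  · refine ae_of_all _ fun z => ?_
    rw [Real.norm_eq_abs]
    refine (abs_topsum_le hKL _).trans ?_
    refine Finset.sum_le_sum fun i _ => ?_
    have hcoord : (a + c • z) i = a i + c * z i := rfl
    rw [hcoord]
    exact (abs_add_le _ _).trans (by rw [abs_mul])


/-- `0 ≤ topsumSm K ε s - topsum K s ≤ ε · E[topsum K Z]`. -/
theorem topsumSm_sub_topsum_bounds (L K : ℕ) (hL : 1 ≤ L) (hK1 : 1 ≤ K) (hKL : K ≤ L)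
    (ε : ℝ) (hε : 0 < ε) (s : EuclideanSpace ℝ (Fin L)) :
    0 ≤ topsumSm K ε s - topsum K s ∧
    topsumSm K ε s - topsum K s ≤
      ε * ∫ z : EuclideanSpace ℝ (Fin L), topsum K z ∂(stdGaussian L) := by
  have hint : Integrable (fun z : EuclideanSpace ℝ (Fin L) => topsum K (s + ε • z))
      (stdGaussian L) := integrable_topsum_affine hKL s ε
  have hint0 : Integrable (fun z : EuclideanSpace ℝ (Fin L) => topsum K z) (stdGaussian L) := by
    have h := integrable_topsum_affine hKL (0 : EuclideanSpace ℝ (Fin L)) 1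
    simpa using h
  have hintS : ∀ S : Finset (Fin L),
      Integrable (fun z : EuclideanSpace ℝ (Fin L) => ∑ i ∈ S, z i) (stdGaussian L) :=
    fun S => integrable_finset_sum _ fun i _ => integrable_eval i
  obtain ⟨S₀, hS₀, hEq₀⟩ := exists_topsum hKL (s : Fin L → ℝ)
  constructor
  · -- lower bound
    rw [sub_nonneg]
    have hptw : ∀ z : EuclideanSpace ℝ (Fin L),
        (∑ i ∈ S₀, s i) + ε * ∑ i ∈ S₀, z i ≤ topsum K (s + ε • z) := by
      intro z
      have h := sum_le_topsum (v := ((s + ε • z : EuclideanSpace ℝ (Fin L)) : Fin L → ℝ)) S₀ hS₀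
      calc (∑ i ∈ S₀, s i) + ε * ∑ i ∈ S₀, z i
          = ∑ i ∈ S₀, (s i + ε * z i) := by rw [Finset.sum_add_distrib, Finset.mul_sum]
        _ ≤ topsum K (s + ε • z) := h
    have hintl : Integrable (fun z : EuclideanSpace ℝ (Fin L) =>
        (∑ i ∈ S₀, s i) + ε * ∑ i ∈ S₀, z i) (stdGaussian L) :=
      (integrable_const _).add ((hintS S₀).const_mul ε)
    have hmono := integral_mono hintl hint hptw
    have hci : ∫ z, ((∑ i ∈ S₀, s i) + ε * ∑ i ∈ S₀, z i) ∂(stdGaussian L)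
        = ∑ i ∈ S₀, s i := by
      rw [integral_add (integrable_const _) ((hintS S₀).const_mul ε), integral_const,
        integral_const_mul, integral_finset_sum _ (fun i _ => integrable_eval i)]
      simp [integral_eval]
    rw [hci] at hmono
    rw [topsumSm, hEq₀]
    exact hmono
  · -- upper bound
    have hptw : ∀ z : EuclideanSpace ℝ (Fin L),
        topsum K (s + ε • z) ≤ topsum K (s : Fin L → ℝ) + ε * topsum K (z : Fin L → ℝ) := by
      intro z
      have h1 : topsum K (s + ε • z)
          ≤ topsum K (s : Fin L → ℝ) + topsum K (fun i => ε * z i) :=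
        topsum_add_le hKL (s : Fin L → ℝ) (fun i => ε * z i)
      have h2 : topsum K (fun i => ε * z i) = ε * topsum K (z : Fin L → ℝ) :=
        topsum_smul hKL hε.le z
      linarith
    have hintr : Integrable (fun z : EuclideanSpace ℝ (Fin L) =>
        topsum K (s : Fin L → ℝ) + ε * topsum K (z : Fin L → ℝ)) (stdGaussian L) :=
      (integrable_const _).add (hint0.const_mul ε)
    have hmono := integral_mono hint hintr hptw
    have hcr : ∫ z, (topsum K (s : Fin L → ℝ) + ε * topsum K (z : Fin L → ℝ)) ∂(stdGaussian L)
        = topsum K (s : Fin L → ℝ) + ε * ∫ z, topsum K z ∂(stdGaussian L) := by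
      rw [integral_add (integrable_const _) (hint0.const_mul ε), integral_const,
        integral_const_mul]
      simp
    rw [hcr] at hmono
    rw [topsumSm]
    linarith
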